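/- Suppose 𝒟 is neighborhood closed and Φ has a 𝒟-pullback attractor A ∈ 𝒟. Then Φ is 𝒟-pullback asymptotically compact in X and Φ has a closed measurable (with respect to the P-completion of F₂) 𝒟-pullback absorbing set K ∈ 𝒟. -/

import Mathlib

open Set Metric MeasureTheory Filter Topology

section RDS

variable {X : Type*} [MetricSpace X] [MeasurableSpace X] [BorelSpace X]
variable {Ω₁ : Type*} {Ω₂ : Type*} [MeasurableSpace Ω₂]

/-- `(Ω₁, θ₁)` is a parametric dynamical system. -/
def IsParamDS₁ (θ₁ : ℝ → Ω₁ → Ω₁) : Prop :=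
  θ₁ 0 = id ∧ ∀ s t : ℝ, θ₁ (s + t) = θ₁ t ∘ θ₁ s

/-- `(Ω₂, F₂, P, θ₂)` is a measure-preserving parametric dynamical system. -/
def IsParamDS₂ (P : Measure Ω₂) (θ₂ : ℝ → Ω₂ → Ω₂) : Prop :=
  Measurable (fun p : ℝ × Ω₂ => θ₂ p.1 p.2) ∧ θ₂ 0 = id ∧
    (∀ s t : ℝ, θ₂ (s + t) = θ₂ t ∘ θ₂ s) ∧ ∀ t : ℝ, MeasurePreserving (θ₂ t) P P

/-- `Φ` is a continuous cocycle on `X` over the two parametric dynamical systems. -/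
def IsCocycle (θ₁ : ℝ → Ω₁ → Ω₁) (θ₂ : ℝ → Ω₂ → Ω₂)
    (Φ : ℝ → Ω₁ → Ω₂ → X → X) : Prop :=
  (∀ ω₁ : Ω₁, Measurable fun p : Ici (0:ℝ) × Ω₂ × X => Φ (p.1 : ℝ) ω₁ p.2.1 p.2.2) ∧
  (∀ ω₁ ω₂, Φ 0 ω₁ ω₂ = id) ∧
  (∀ t τ : ℝ, 0 ≤ t → 0 ≤ τ → ∀ ω₁ ω₂,
      Φ (t + τ) ω₁ ω₂ = (Φ t (θ₁ τ ω₁) (θ₂ τ ω₂)) ∘ (Φ τ ω₁ ω₂)) ∧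
  (∀ t : ℝ, 0 ≤ t → ∀ ω₁ ω₂, Continuous (Φ t ω₁ ω₂))

/-- The pullback image `Φ(t, θ₁(-t)ω₁, θ₂(-t)ω₂, B(θ₁(-t)ω₁, θ₂(-t)ω₂))`. -/
def pbImage (θ₁ : ℝ → Ω₁ → Ω₁) (θ₂ : ℝ → Ω₂ → Ω₂) (Φ : ℝ → Ω₁ → Ω₂ → X → X)
    (B : Ω₁ → Ω₂ → Set X) (t : ℝ) (ω₁ : Ω₁) (ω₂ : Ω₂) : Set X :=
  Φ t (θ₁ (-t) ω₁) (θ₂ (-t) ω₂) '' B (θ₁ (-t) ω₁) (θ₂ (-t) ω₂)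

/-- The collection `𝒟` is neighborhood closed. -/
def NbhdClosed (𝒟 : Set (Ω₁ → Ω₂ → Set X)) : Prop :=
  ∀ D ∈ 𝒟, ∃ ε > (0:ℝ), ∀ B : Ω₁ → Ω₂ → Set X,
    (∀ ω₁ ω₂, (B ω₁ ω₂).Nonempty ∧ B ω₁ ω₂ ⊆ thickening ε (D ω₁ ω₂)) → B ∈ 𝒟

/-- `K` is a `𝒟`-pullback absorbing set for `Φ`. -/
def AbsorbsFam (θ₁ : ℝ → Ω₁ → Ω₁) (θ₂ : ℝ → Ω₂ → Ω₂) (Φ : ℝ → Ω₁ → Ω₂ → X → X)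
    (𝒟 : Set (Ω₁ → Ω₂ → Set X)) (K : Ω₁ → Ω₂ → Set X) : Prop :=
  ∀ ω₁ ω₂, ∀ B ∈ 𝒟, ∃ T > (0:ℝ), ∀ t ≥ T, pbImage θ₁ θ₂ Φ B t ω₁ ω₂ ⊆ K ω₁ ω₂

/-- `K` is measurable with respect to the `P`-completion of the σ-algebra of `Ω₂`. -/
def MeasurableFam (P : Measure Ω₂) (K : Ω₁ → Ω₂ → Set X) : Prop :=
  ∀ (x : X) (ω₁ : Ω₁), NullMeasurable (fun ω₂ => infDist x (K ω₁ ω₂)) P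

/-- `Φ` is `𝒟`-pullback asymptotically compact in `X`. -/
def AsympCompact (θ₁ : ℝ → Ω₁ → Ω₁) (θ₂ : ℝ → Ω₂ → Ω₂) (Φ : ℝ → Ω₁ → Ω₂ → X → X)
    (𝒟 : Set (Ω₁ → Ω₂ → Set X)) : Prop :=
  ∀ ω₁ ω₂, ∀ B ∈ 𝒟, ∀ (t : ℕ → ℝ) (x : ℕ → X),
    Tendsto t atTop atTop →
    (∀ n, x n ∈ B (θ₁ (-(t n)) ω₁) (θ₂ (-(t n)) ω₂)) →
    ∃ (φ : ℕ → ℕ) (y : X), StrictMono φ ∧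
      Tendsto (fun n => Φ (t (φ n)) (θ₁ (-(t (φ n))) ω₁) (θ₂ (-(t (φ n))) ω₂) (x (φ n)))
        atTop (𝓝 y)

/-- `A` pullback attracts every member of `𝒟` (Hausdorff semidistance goes to `0`). -/
def AttractsFam (θ₁ : ℝ → Ω₁ → Ω₁) (θ₂ : ℝ → Ω₂ → Ω₂) (Φ : ℝ → Ω₁ → Ω₂ → X → X)
    (𝒟 : Set (Ω₁ → Ω₂ → Set X)) (A : Ω₁ → Ω₂ → Set X) : Prop :=
  ∀ ω₁ ω₂, ∀ B ∈ 𝒟, ∀ ε > (0:ℝ), ∃ T : ℝ, ∀ t ≥ T,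
    pbImage θ₁ θ₂ Φ B t ω₁ ω₂ ⊆ thickening ε (A ω₁ ω₂)

/-- `A` is a `𝒟`-pullback attractor for `Φ`. -/
def IsPullbackAttractor (P : Measure Ω₂) (θ₁ : ℝ → Ω₁ → Ω₁) (θ₂ : ℝ → Ω₂ → Ω₂)
    (Φ : ℝ → Ω₁ → Ω₂ → X → X) (𝒟 : Set (Ω₁ → Ω₂ → Set X)) (A : Ω₁ → Ω₂ → Set X) : Prop :=
  A ∈ 𝒟 ∧ MeasurableFam P A ∧
  (∀ ω₁ ω₂, IsCompact (A ω₁ ω₂)) ∧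
  (∀ t : ℝ, 0 ≤ t → ∀ ω₁ ω₂, Φ t ω₁ ω₂ '' A ω₁ ω₂ = A (θ₁ t ω₁) (θ₂ t ω₂)) ∧
  AttractsFam θ₁ θ₂ Φ 𝒟 A

/-- The Ω-limit set of a family `B`. -/
def omegaLimitFam (θ₁ : ℝ → Ω₁ → Ω₁) (θ₂ : ℝ → Ω₂ → Ω₂) (Φ : ℝ → Ω₁ → Ω₂ → X → X)
    (B : Ω₁ → Ω₂ → Set X) (ω₁ : Ω₁) (ω₂ : Ω₂) : Set X :=
  ⋂ τ ∈ Ici (0:ℝ), closure (⋃ t ∈ Ici τ, pbImage θ₁ θ₂ Φ B t ω₁ ω₂)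


open scoped Classical in
/-- infEdist to an open set equals the inf over a dense sequence restricted to the set. -/
lemma infEdist_open_eq_iInf' {X : Type*} [MetricSpace X] {T : Set X} (hT : IsOpen T)
    (u : ℕ → X) (hu : DenseRange u) (x : X) :
    Metric.infEDist x T = ⨅ n, (if u n ∈ T then edist x (u n) else ⊤) := by
  apply le_antisymm
  · refine le_iInf fun n => ?_
    split_ifs with h
    · exact EMetric.infEdist_le_edist_of_mem h
    · exact le_top
  · have h1 : T ⊆ closure (T ∩ Set.range u) := Dense.open_subset_closure_inter hu hT
    calc ⨅ n, (if u n ∈ T then edist x (u n) else ⊤)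
        ≤ EMetric.infEdist x (T ∩ Set.range u) := by
          refine EMetric.le_infEdist.mpr fun y hy => ?_
          obtain ⟨hyT, n, rfl⟩ := hy
          refine iInf_le_of_le n ?_
          simp [hyT]
      _ = EMetric.infEdist x (closure (T ∩ Set.range u)) := EMetric.infEdist_closure.symm
      _ ≤ EMetric.infEdist x T := EMetric.infEdist_anti h1

/-- Proposition 2.1, necessity part. If `𝒟` is neighborhood closed and `Φ` has
a `𝒟`-pullback attractor `A ∈ 𝒟`, then `Φ` is `𝒟`-pullback asymptotically compact and has a
closed measurable `𝒟`-pullback absorbing set `K ∈ 𝒟`. -/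
theorem pullback_attractor_necessary_conditions
    [CompleteSpace X] [TopologicalSpace.SeparableSpace X] [Nonempty Ω₁]
    (θ₁ : ℝ → Ω₁ → Ω₁) (θ₂ : ℝ → Ω₂ → Ω₂)
    (P : Measure Ω₂) [IsProbabilityMeasure P]
    (Φ : ℝ → Ω₁ → Ω₂ → X → X)
    (𝒟 : Set (Ω₁ → Ω₂ → Set X))
    (hθ₁ : IsParamDS₁ θ₁) (hθ₂ : IsParamDS₂ P θ₂)
    (hΦ : IsCocycle θ₁ θ₂ Φ)
    (h𝒟ne : ∀ D ∈ 𝒟, ∀ ω₁ ω₂, (D ω₁ ω₂).Nonempty)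
    (h𝒟 : NbhdClosed 𝒟)
    (A : Ω₁ → Ω₂ → Set X)
    (hA : IsPullbackAttractor P θ₁ θ₂ Φ 𝒟 A) :
    AsympCompact θ₁ θ₂ Φ 𝒟 ∧
      ∃ K : Ω₁ → Ω₂ → Set X, K ∈ 𝒟 ∧
        (∀ ω₁ ω₂, (K ω₁ ω₂).Nonempty ∧ IsClosed (K ω₁ ω₂)) ∧
        MeasurableFam P K ∧
        AbsorbsFam θ₁ θ₂ Φ 𝒟 K := by
  obtain ⟨hAmem, hAmeas, hAcomp, hAinv, hAatt⟩ := hA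
  have hAne : ∀ ω₁ ω₂, (A ω₁ ω₂).Nonempty := h𝒟ne A hAmem
  constructor
  · -- asymptotic compactness
    intro ω₁ ω₂ B hB t x ht hx
    set y : ℕ → X := fun n => Φ (t n) (θ₁ (-(t n)) ω₁) (θ₂ (-(t n)) ω₂) (x n) with hy
    choose a haA had using fun n =>
      (hAcomp ω₁ ω₂).exists_infDist_eq_dist (hAne ω₁ ω₂) (y n)
    have hd0 : Tendsto (fun n => dist (y n) (a n)) atTop (𝓝 0) := by
      rw [Metric.tendsto_atTop]
      intro ε hε
      obtain ⟨T, hT⟩ := hAatt ω₁ ω₂ B hB ε hε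
      obtain ⟨N, hN⟩ := eventually_atTop.mp (ht.eventually_ge_atTop T)
      refine ⟨N, fun n hn => ?_⟩
      have hyn : y n ∈ thickening ε (A ω₁ ω₂) := by
        apply hT (t n) (hN n hn)
        exact Set.mem_image_of_mem _ (hx n)
      have : infDist (y n) (A ω₁ ω₂) < ε :=
        (mem_thickening_iff_infDist_lt (hAne ω₁ ω₂)).mp hyn
      rw [← had n] at *
      rw [Real.dist_eq, sub_zero, abs_of_nonneg infDist_nonneg]
      exact this
    obtain ⟨a', _, φ, hφ, hconv⟩ := (hAcomp ω₁ ω₂).tendsto_subseq haA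
    refine ⟨φ, a', hφ, ?_⟩
    have h1 : Tendsto (fun n => dist (a (φ n)) a') atTop (𝓝 0) :=
      tendsto_iff_dist_tendsto_zero.mp hconv
    have h2 : Tendsto (fun n => dist (y (φ n)) (a (φ n))) atTop (𝓝 0) :=
      hd0.comp (hφ.tendsto_atTop)
    have : Tendsto (fun n => dist (y (φ n)) a') atTop (𝓝 0) := by
      have hsum : Tendsto (fun n => dist (y (φ n)) (a (φ n)) + dist (a (φ n)) a')
          atTop (𝓝 0) := by
        simpa using h2.add h1
      refine squeeze_zero (fun n => dist_nonneg) (fun n => dist_triangle _ _ _) hsum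
    exact tendsto_iff_dist_tendsto_zero.mpr this
  · -- absorbing set
    obtain ⟨ε, hε, hεprop⟩ := h𝒟 A hAmem
    set δ : ℝ := ε / 2 with hδdef
    have hδ : 0 < δ := half_pos hε
    refine ⟨fun ω₁ ω₂ => closure (thickening δ (A ω₁ ω₂)), ?_, ?_, ?_, ?_⟩
    · -- K ∈ 𝒟
      refine hεprop _ fun ω₁ ω₂ => ⟨?_, ?_⟩
      · exact ((hAne ω₁ ω₂).mono (self_subset_thickening hδ _)).mono subset_closure
      · refine (closure_minimal (thickening_subset_cthickening δ _)
          isClosed_cthickening).trans ?_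
        exact cthickening_subset_thickening' hε (half_lt_self hε) _
    · exact fun ω₁ ω₂ =>
        ⟨((hAne ω₁ ω₂).mono (self_subset_thickening hδ _)).mono subset_closure,
          isClosed_closure⟩
    · -- measurability
      intro x ω₁
      have : Nonempty X := ⟨x⟩
      obtain ⟨u, hu⟩ := TopologicalSpace.exists_dense_seq X
      classical
      have key : ∀ ω₂, infDist x (closure (thickening δ (A ω₁ ω₂)))
          = (⨅ n, (if infDist (u n) (A ω₁ ω₂) < δ then edist x (u n) else ⊤)).toReal := by
        intro ω₂
        rw [infDist, EMetric.infEdist_closure,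
          infEdist_open_eq_iInf' isOpen_thickening u hu x]
        congr 1
        refine iInf_congr fun n => ?_
        congr 1
        simp only [eq_iff_iff]
        exact mem_thickening_iff_infDist_lt (hAne ω₁ ω₂)
      have hmeas : @Measurable (NullMeasurableSpace Ω₂ P) _ _ _
          (fun ω₂ => (⨅ n, (if infDist (u n) (A ω₁ ω₂) < δ
            then edist x (u n) else ⊤)).toReal) := by
        apply Measurable.ennreal_toReal
        apply Measurable.iInf
        intro n
        have hset : @MeasurableSet (NullMeasurableSpace Ω₂ P) _
            {ω₂ | infDist (u n) (A ω₁ ω₂) < δ} := by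
          have := hAmeas (u n) ω₁
          exact this measurableSet_Iio
        exact Measurable.ite hset measurable_const measurable_const
      have : NullMeasurable (fun ω₂ => (⨅ n, (if infDist (u n) (A ω₁ ω₂) < δ
            then edist x (u n) else ⊤)).toReal) P :=
        fun s hs => hmeas hs
      simpa only [key] using this
    · -- absorbing
      intro ω₁ ω₂ B hB
      obtain ⟨T, hT⟩ := hAatt ω₁ ω₂ B hB δ hδ
      refine ⟨max T 1, lt_of_lt_of_le one_pos (le_max_right _ _), fun t' ht' => ?_⟩
      exact (hT t' (le_trans (le_max_left _ _) ht')).trans subset_closure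


end RDS
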